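/- Let k ≥ 1 be a natural number and let r be a real number with -1 < r < 0. Then the quantity U(k,r) = (r/k) · ∏_{i=1}^{k-1} (1 + r/i) satisfies U(k,r) < 0 and |U(k,r)| ≤ |r|/k^{1-r}. -/

import Mathlib

lemma log_le_harmonic (k : ℕ) (hk : 1 ≤ k) :
    Real.log k ≤ ∑ i ∈ Finset.Icc 1 (k - 1), (1 / (i : ℝ)) := by
  induction k with
  | zero => omega
  | succ n ih =>
    rcases Nat.eq_or_lt_of_le hk with h | h
    · simp [← h]
    · have hn : 1 ≤ n := by omega
      have ihn := ih hn
      have hsum : ∑ i ∈ Finset.Icc 1 (n + 1 - 1), (1 / (i : ℝ))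
          = (∑ i ∈ Finset.Icc 1 (n - 1), (1 / (i : ℝ))) + 1 / n := by
        have h : n + 1 - 1 = (n - 1) + 1 := by omega
        rw [h, Finset.sum_Icc_succ_top (by omega), show (n - 1) + 1 = n from by omega]
      have hnpos : (0 : ℝ) < n := by exact_mod_cast hn
      have hlog : Real.log (n + 1) ≤ Real.log n + 1 / n := by
        have h1 : Real.log (((n : ℝ) + 1) / n) ≤ ((n : ℝ) + 1) / n - 1 :=
          Real.log_le_sub_one_of_pos (by positivity)
        have h2 : ((n : ℝ) + 1) / n - 1 = 1 / n := by field_simp; ring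
        have h3 : Real.log (((n : ℝ) + 1) / n) = Real.log (n + 1) - Real.log n :=
          Real.log_div (by positivity) (ne_of_gt hnpos)
        rw [h3, h2] at h1
        linarith
      rw [hsum]
      push_cast
      calc Real.log ((n : ℝ) + 1) ≤ Real.log n + 1 / n := hlog
        _ ≤ (∑ i ∈ Finset.Icc 1 (n - 1), (1 / (i : ℝ))) + 1 / n := by linarith

/-- For `k ≥ 1` optimization cycles and supply forecast error rate `-1 < r < 0`,
the quantity `U(k,r) = (r/k) · ∏_{i=1}^{k-1} (1 + r/i)` is negative (i.e. the
contract overdelivers) and its absolute value is bounded above by `|r|/k^(1-r)`. -/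
theorem overdelivery_bound_neg_error (k : ℕ) (hk : 1 ≤ k) (r : ℝ)
    (hr0 : -1 < r) (hr1 : r < 0) :
    (r / (k : ℝ)) * ∏ i ∈ Finset.Icc 1 (k - 1), (1 + r / (i : ℝ)) < 0 ∧
      |(r / (k : ℝ)) * ∏ i ∈ Finset.Icc 1 (k - 1), (1 + r / (i : ℝ))| ≤
        |r| / (k : ℝ) ^ (1 - r) := by
  have hkpos : (0 : ℝ) < k := by exact_mod_cast hk
  have hfac : ∀ i ∈ Finset.Icc 1 (k - 1), (0 : ℝ) < 1 + r / (i : ℝ) := by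
    intro i hi
    simp only [Finset.mem_Icc] at hi
    have hipos : (0 : ℝ) < i := by exact_mod_cast hi.1
    have h1 : (1 : ℝ) ≤ i := by exact_mod_cast hi.1
    have : -1 < r / (i : ℝ) := by
      rw [neg_lt, ← neg_div]
      calc (-r) / (i : ℝ) ≤ (-r) / 1 := by
            apply div_le_div_of_nonneg_left (by linarith) one_pos h1
        _ = -r := by ring
        _ < 1 := by linarith
    linarith
  have hP : (0 : ℝ) < ∏ i ∈ Finset.Icc 1 (k - 1), (1 + r / (i : ℝ)) :=
    Finset.prod_pos hfac
  have hneg : (r / (k : ℝ)) * ∏ i ∈ Finset.Icc 1 (k - 1), (1 + r / (i : ℝ)) < 0 :=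
    mul_neg_of_neg_of_pos (div_neg_of_neg_of_pos hr1 hkpos) hP
  refine ⟨hneg, ?_⟩
  -- bound the product by exp of the sum
  have hPle : ∏ i ∈ Finset.Icc 1 (k - 1), (1 + r / (i : ℝ))
      ≤ Real.exp (∑ i ∈ Finset.Icc 1 (k - 1), r / (i : ℝ)) := by
    rw [Real.exp_sum]
    apply Finset.prod_le_prod
    · intro i hi; exact le_of_lt (hfac i hi)
    · intro i hi
      have := Real.add_one_le_exp (r / (i : ℝ))
      linarith
  have hsum : ∑ i ∈ Finset.Icc 1 (k - 1), r / (i : ℝ)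
      = r * ∑ i ∈ Finset.Icc 1 (k - 1), (1 / (i : ℝ)) := by
    rw [Finset.mul_sum]; apply Finset.sum_congr rfl; intro i _; ring
  have hH := log_le_harmonic k hk
  have hrs : r * ∑ i ∈ Finset.Icc 1 (k - 1), (1 / (i : ℝ)) ≤ r * Real.log k :=
    mul_le_mul_of_nonpos_left hH (le_of_lt hr1)
  have hPle2 : ∏ i ∈ Finset.Icc 1 (k - 1), (1 + r / (i : ℝ)) ≤ (k : ℝ) ^ r := by
    calc ∏ i ∈ Finset.Icc 1 (k - 1), (1 + r / (i : ℝ))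
        ≤ Real.exp (∑ i ∈ Finset.Icc 1 (k - 1), r / (i : ℝ)) := hPle
      _ = Real.exp (r * ∑ i ∈ Finset.Icc 1 (k - 1), (1 / (i : ℝ))) := by rw [hsum]
      _ ≤ Real.exp (r * Real.log k) := Real.exp_le_exp.mpr hrs
      _ = (k : ℝ) ^ r := by
          rw [Real.rpow_def_of_pos hkpos, mul_comm]
  -- rewrite the absolute value
  have habs : |(r / (k : ℝ)) * ∏ i ∈ Finset.Icc 1 (k - 1), (1 + r / (i : ℝ))|
      = (|r| / (k : ℝ)) * ∏ i ∈ Finset.Icc 1 (k - 1), (1 + r / (i : ℝ)) := by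
    rw [abs_mul, abs_div, abs_of_pos hkpos, abs_of_pos hP]
  rw [habs]
  have hrpow : |r| / (k : ℝ) ^ (1 - r) = (|r| / (k : ℝ)) * (k : ℝ) ^ r := by
    rw [Real.rpow_sub hkpos, Real.rpow_one]
    have h1 : (k : ℝ) ^ r ≠ 0 := ne_of_gt (Real.rpow_pos_of_pos hkpos r)
    field_simp
  rw [hrpow]
  apply mul_le_mul_of_nonneg_left hPle2 (by positivity)
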